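/- Let A₁, A₂ ∈ ℝ^{k₁×k₂} and k ∈ {1,…,min(k₁,k₂)}. Let Ψ₁ ∈ ℝ^{k₂×k} (respectively Ψ₂ ∈ ℝ^{k₂×k}) be any matrix whose columns are orthonormal and whose i-th column is an eigenvector of A₁ᵀA₁ (respectively A₂ᵀA₂) with eigenvalue σ_i(A₁)² (respectively σ_i(A₂)²), for i = 1,…,k. Then 0 ≤ ‖A₁Ψ₁‖_F² − ‖A₁Ψ₂‖_F² ≤ 4k·‖A₁‖₂·‖A₁ − A₂‖₂, and moreover ‖A₁Ψ₁‖_F² − ‖A₁Ψ₂‖_F² ≤ 4√k·‖A₁‖₂·‖A₁ − A₂‖_F. -/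

import Mathlib

open Matrix

/-- The `i`-th largest element (0-indexed) of a finite family of real numbers
(by convention `0` if `i` is out of range). -/
noncomputable def ithLargest {ι : Type*} [Fintype ι] (f : ι → ℝ) (i : ℕ) : ℝ :=
  (((Finset.univ.val.map f).sort (· ≤ ·)).reverse).getD i 0

/-- The `i`-th largest singular value (0-indexed) of a real matrix `A`: the square root of
the `i`-th largest eigenvalue of `Aᴴ * A` (over `ℝ`, `Aᴴ = Aᵀ`). -/
noncomputable def singularValue {m n : Type*} [Fintype m] [Fintype n] [DecidableEq n]
    (A : Matrix m n ℝ) (i : ℕ) : ℝ :=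
  Real.sqrt (ithLargest (Matrix.isHermitian_conjTranspose_mul_self A).eigenvalues i)

/-- The Frobenius norm of a real matrix. -/
noncomputable def frobNorm {m n : Type*} [Fintype m] [Fintype n] (A : Matrix m n ℝ) : ℝ :=
  Real.sqrt (∑ i, ∑ j, A i j ^ 2)

/-- The squared Frobenius norm of a real matrix. -/
noncomputable def frobSq {m n : Type*} [Fintype m] [Fintype n] (A : Matrix m n ℝ) : ℝ :=
  ∑ i, ∑ j, A i j ^ 2

namespace Aux

variable {ι : Type*} [Fintype ι]

noncomputable def dList (f : ι → ℝ) : List ℝ :=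
  ((Finset.univ.val.map f).sort (· ≤ ·)).reverse

lemma ithLargest_eq (f : ι → ℝ) (i : ℕ) : ithLargest f i = (dList f).getD i 0 := rfl

lemma dList_length (f : ι → ℝ) : (dList f).length = Fintype.card ι := by
  simp [dList, Multiset.length_sort]

lemma dList_sorted (f : ι → ℝ) : (dList f).Pairwise (· ≥ ·) := by
  rw [dList]
  have h := Multiset.pairwise_sort (α := ℝ) (Finset.univ.val.map f) (· ≤ ·)
  exact List.pairwise_reverse.mpr (h.imp (fun hab => hab))

lemma dList_coe (f : ι → ℝ) : ((dList f) : Multiset ℝ) = Finset.univ.val.map f := by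
  rw [dList]
  exact (Multiset.coe_reverse _).trans (Multiset.sort_eq _ _)

lemma mem_dList {f : ι → ℝ} {a : ℝ} (h : a ∈ dList f) : ∃ j, f j = a := by
  have : a ∈ ((dList f) : Multiset ℝ) := h
  rw [dList_coe] at this
  obtain ⟨j, _, hj⟩ := Multiset.mem_map.1 this
  exact ⟨j, hj⟩

lemma ithLargest_anti (f : ι → ℝ) {i j : ℕ} (hij : i ≤ j) (hj : j < Fintype.card ι) :
    ithLargest f j ≤ ithLargest f i := by
  have hj' : j < (dList f).length := by rw [dList_length]; exact hj
  have hi' : i < (dList f).length := lt_of_le_of_lt hij hj'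
  rw [ithLargest_eq, ithLargest_eq, List.getD_eq_get _ _ ⟨i, hi'⟩, List.getD_eq_get _ _ ⟨j, hj'⟩]
  rcases eq_or_lt_of_le hij with h | h
  · subst h; rfl
  · exact (dList_sorted f).rel_get_of_lt (by exact h)

lemma ithLargest_mem (f : ι → ℝ) {i : ℕ} (hi : i < Fintype.card ι) :
    ∃ j, f j = ithLargest f i := by
  have hi' : i < (dList f).length := by rw [dList_length]; exact hi
  rw [ithLargest_eq, List.getD_eq_get _ _ ⟨i, hi'⟩]
  exact mem_dList (List.get_mem _ _)

lemma le_ithLargest_zero (f : ι → ℝ) (j : ι) (h0 : 0 < Fintype.card ι) :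
    f j ≤ ithLargest f 0 := by
  have hm : f j ∈ dList f := by
    show f j ∈ ((dList f) : Multiset ℝ)
    rw [dList_coe]
    exact Multiset.mem_map.2 ⟨j, Finset.mem_univ j, rfl⟩
  obtain ⟨p, hp⟩ := List.mem_iff_get.1 hm
  have h0' : 0 < (dList f).length := by rw [dList_length]; exact h0
  rw [ithLargest_eq, List.getD_eq_get _ _ ⟨0, h0'⟩]
  rcases Nat.eq_zero_or_pos (p : ℕ) with h | h
  · have hpe : p = ⟨0, h0'⟩ := Fin.ext (by simpa using h)
    rw [← hp, hpe]
  · rw [← hp]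
    exact (dList_sorted f).rel_get_of_lt (show (⟨0, h0'⟩ : Fin _) < p from h)

lemma list_sum_map_eq (g : ℝ → ℝ) : ∀ L : List ℝ,
    (L.map g).sum = ∑ i ∈ Finset.range L.length, g (L.getD i 0)
  | [] => by simp
  | a :: L => by
    rw [List.map_cons, List.sum_cons, List.length_cons, Finset.sum_range_succ']
    simp only [List.getD_cons_succ, List.getD_cons_zero]
    rw [list_sum_map_eq g L, add_comm]

lemma sum_comp (f : ι → ℝ) (g : ℝ → ℝ) :
    ∑ j, g (f j) = ((dList f).map g).sum := by
  have : ((dList f).map g : Multiset ℝ) = (Finset.univ.val.map f).map g := by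
    rw [← Multiset.map_coe, dList_coe]
  calc ∑ j, g (f j) = ((Finset.univ.val.map f).map g).sum := by
        rw [Multiset.map_map]; rfl
    _ = ((dList f).map g).sum := by rw [← this]; rfl

lemma kyfan_aux (f : ι → ℝ) (c : ι → ℝ) (k : ℕ) (hk1 : 1 ≤ k) (hk : k ≤ Fintype.card ι)
    (hc0 : ∀ j, 0 ≤ c j) (hc1 : ∀ j, c j ≤ 1) (hcs : ∑ j, c j = (k : ℝ)) :
    ∑ j, f j * c j ≤ ∑ i ∈ Finset.range k, ithLargest f i := by
  set t := ithLargest f (k - 1) with ht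
  have hkn : k - 1 < Fintype.card ι := lt_of_lt_of_le (Nat.sub_lt hk1 one_pos) hk
  -- the key identity
  have hmax : ∑ j, max (f j - t) 0 = ∑ i ∈ Finset.range k, (ithLargest f i - t) := by
    rw [sum_comp f (fun x => max (x - t) 0), list_sum_map_eq, dList_length]
    have hsplit : Finset.range (Fintype.card ι) =
        Finset.range k ∪ Finset.Ico k (Fintype.card ι) := by
      rw [Finset.range_eq_Ico, Finset.range_eq_Ico]
      exact (Finset.Ico_union_Ico_eq_Ico (Nat.zero_le k) hk).symm
    rw [hsplit, Finset.sum_union (by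
      rw [Finset.range_eq_Ico]
      exact Finset.Ico_disjoint_Ico_consecutive 0 k (Fintype.card ι))]
    have h1 : ∀ i ∈ Finset.range k, max ((dList f).getD i 0 - t) 0 =
        ithLargest f i - t := by
      intro i hi
      rw [Finset.mem_range] at hi
      have : t ≤ ithLargest f i :=
        ithLargest_anti f (Nat.le_sub_one_of_lt hi) hkn
      rw [← ithLargest_eq]
      exact max_eq_left (by linarith)
    have h2 : ∀ i ∈ Finset.Ico k (Fintype.card ι), max ((dList f).getD i 0 - t) 0 = 0 := by
      intro i hi
      rw [Finset.mem_Ico] at hi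
      have : ithLargest f i ≤ t :=
        ithLargest_anti f (le_trans (Nat.sub_le k 1) hi.1) hi.2
      rw [← ithLargest_eq]
      exact max_eq_right (by linarith)
    rw [Finset.sum_congr rfl h1, Finset.sum_congr rfl h2, Finset.sum_const_zero, add_zero]
  have step1 : ∑ j, f j * c j ≤ ∑ j, (max (f j - t) 0 + t * c j) := by
    apply Finset.sum_le_sum
    intro j _
    have h := hc0 j
    have h' := hc1 j
    rcases le_or_gt t (f j) with hle | hlt
    · have : max (f j - t) 0 = f j - t := max_eq_left (by linarith)
      rw [this]; nlinarith
    · have : (0:ℝ) ≤ max (f j - t) 0 := le_max_right _ _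
      nlinarith
  calc ∑ j, f j * c j ≤ ∑ j, (max (f j - t) 0 + t * c j) := step1
    _ = ∑ j, max (f j - t) 0 + t * ∑ j, c j := by
        rw [Finset.sum_add_distrib, Finset.mul_sum]
    _ = ∑ i ∈ Finset.range k, (ithLargest f i - t) + t * k := by rw [hmax, hcs]
    _ = ∑ i ∈ Finset.range k, ithLargest f i := by
        rw [Finset.sum_sub_distrib, Finset.sum_const, Finset.card_range]
        ring



lemma hinner {n : ℕ} (x y : EuclideanSpace ℝ (Fin n)) :
    (inner ℝ x y : ℝ) = ∑ i, x i * y i := by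
  simp [PiLp.inner_apply, RCLike.inner_apply, mul_comm]

lemma quadform_eq {k₁ k₂ : ℕ} (A : Matrix (Fin k₁) (Fin k₂) ℝ) (ψ : Fin k₂ → ℝ) :
    ∑ y, ψ y * ((Aᵀ * A).mulVec ψ) y = ∑ x, (A.mulVec ψ x) ^ 2 := by
  rw [← Matrix.mulVec_mulVec]
  simp only [Matrix.mulVec, dotProduct, Matrix.transpose_apply]
  simp only [Finset.mul_sum]
  rw [Finset.sum_comm]
  refine Finset.sum_congr rfl fun x _ => ?_
  rw [sq, Finset.sum_mul_sum]
  exact Finset.sum_congr rfl fun y _ => Finset.sum_congr rfl fun i _ => by ring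

lemma quad_eigen {n : ℕ} {M : Matrix (Fin n) (Fin n) ℝ} (hM : M.IsHermitian)
    (ψ : EuclideanSpace ℝ (Fin n)) :
    ∑ y, ψ y * (M.mulVec ψ) y
      = ∑ j, hM.eigenvalues j * (inner ℝ (hM.eigenvectorBasis j) ψ : ℝ) ^ 2 := by
  have hMt : Mᵀ = M := by
    ext i j
    have := congrFun (congrFun hM.eq i) j
    simpa [Matrix.conjTranspose_apply] using this
  have key : ∀ j, (inner ℝ (hM.eigenvectorBasis j) (WithLp.toLp 2 (M.mulVec ψ)) : ℝ)
      = hM.eigenvalues j * (inner ℝ (hM.eigenvectorBasis j) ψ : ℝ) := by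
    intro j
    rw [hinner, hinner, WithLp.ofLp_toLp]
    have h1 : ∑ i, (hM.eigenvectorBasis j) i * (M.mulVec ψ) i
        = (⇑(hM.eigenvectorBasis j)) ⬝ᵥ (M.mulVec ψ) := rfl
    rw [h1, dotProduct_mulVec, ← Matrix.mulVec_transpose, hMt,
      hM.mulVec_eigenvectorBasis]
    simp [dotProduct, Finset.mul_sum, mul_assoc]
  have hsum := (hM.eigenvectorBasis).sum_inner_mul_inner ψ (WithLp.toLp 2 (M.mulVec ψ))
  calc ∑ y, ψ y * (M.mulVec ψ) y
      = (inner ℝ ψ (WithLp.toLp 2 (M.mulVec ψ)) : ℝ) := (hinner ψ (WithLp.toLp 2 (M.mulVec ψ))).symm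
    _ = ∑ j, (inner ℝ ψ (hM.eigenvectorBasis j) : ℝ)
          * (inner ℝ (hM.eigenvectorBasis j) (WithLp.toLp 2 (M.mulVec ψ)) : ℝ) :=
        hsum.symm
    _ = ∑ j, hM.eigenvalues j * (inner ℝ (hM.eigenvectorBasis j) ψ : ℝ) ^ 2 := by
        refine Finset.sum_congr rfl fun j _ => ?_
        rw [key, real_inner_comm ψ]
        ring

lemma parseval {n : ℕ} (b : OrthonormalBasis (Fin n) ℝ (EuclideanSpace ℝ (Fin n)))
    (ψ : EuclideanSpace ℝ (Fin n)) :
    ∑ j, (inner ℝ (b j) ψ : ℝ) ^ 2 = ∑ y, ψ y * ψ y := by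
  have := b.sum_inner_mul_inner ψ ψ
  rw [hinner ψ ψ] at this
  rw [← this]
  refine Finset.sum_congr rfl fun j _ => ?_
  rw [real_inner_comm ψ]
  ring





lemma conjT_eq {m n : Type*} (A : Matrix m n ℝ) : Aᴴ = Aᵀ := by
  ext i j; simp [Matrix.conjTranspose_apply]

lemma transpose_mul_self_isHermitian {k₁ k₂ : ℕ} (A : Matrix (Fin k₁) (Fin k₂) ℝ) :
    (Aᵀ * A).IsHermitian := by
  rw [← conjT_eq]; exact Matrix.isHermitian_conjTranspose_mul_self A

/-- orthonormal family from the column-orthonormality hypothesis -/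
lemma orth_family {k₂ k : ℕ} (Ψ : Matrix (Fin k₂) (Fin k) ℝ)
    (horth : ∀ i j, ∑ x, Ψ x i * Ψ x j = if i = j then (1:ℝ) else 0)
    (v : Fin k → EuclideanSpace ℝ (Fin k₂)) (hv : ∀ i x, v i x = Ψ x i) :
    Orthonormal ℝ v := by
  rw [orthonormal_iff_ite]
  intro i j
  rw [hinner]
  simp only [hv]
  exact horth i j

/-- Ky Fan: trace of quadratic form over orthonormal columns is at most sum of top eigenvalues -/
lemma kyfan {k₁ k₂ k : ℕ} (hk1 : 1 ≤ k) (hk2 : k ≤ k₂) (A : Matrix (Fin k₁) (Fin k₂) ℝ)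
    (Ψ : Matrix (Fin k₂) (Fin k) ℝ)
    (horth : ∀ i j, ∑ x, Ψ x i * Ψ x j = if i = j then (1:ℝ) else 0) :
    ∑ i : Fin k, ∑ x, (A.mulVec (fun y => Ψ y i) x) ^ 2
      ≤ ∑ i ∈ Finset.range k,
          ithLargest (Matrix.isHermitian_conjTranspose_mul_self A).eigenvalues i := by
  set hM := Matrix.isHermitian_conjTranspose_mul_self A with hMdef
  have hMeq : Aᴴ * A = Aᵀ * A := by rw [conjT_eq]
  set u := hM.eigenvectorBasis
  set lam := hM.eigenvalues
  set v : Fin k → EuclideanSpace ℝ (Fin k₂) := fun i => WithLp.toLp 2 (fun x => Ψ x i)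
  have hexp : ∀ i : Fin k, ∑ x, (A.mulVec (fun y => Ψ y i) x) ^ 2
      = ∑ j, lam j * (inner ℝ (u j) (v i) : ℝ) ^ 2 := by
    intro i
    rw [← quadform_eq]
    have : (Aᵀ * A).mulVec (fun y => Ψ y i) = (Aᴴ * A).mulVec (v i) := by rw [hMeq]
    rw [this]
    exact quad_eigen hM (v i)
  have hswap : ∑ i : Fin k, ∑ j, lam j * (inner ℝ (u j) (v i) : ℝ) ^ 2
      = ∑ j, lam j * (∑ i : Fin k, (inner ℝ (u j) (v i) : ℝ) ^ 2) := by
    rw [Finset.sum_comm]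
    exact Finset.sum_congr rfl fun j _ => by rw [Finset.mul_sum]
  rw [Finset.sum_congr rfl fun i _ => hexp i, hswap]
  apply kyfan_aux lam (fun j => ∑ i : Fin k, (inner ℝ (u j) (v i) : ℝ) ^ 2) k hk1
    (by simpa using hk2)
  · intro j
    exact Finset.sum_nonneg fun i _ => sq_nonneg _
  · intro j
    have hb := (orth_family Ψ horth v (fun i x => rfl)).sum_inner_products_le
      (s := Finset.univ) (u j)
    have hnorm : ‖u j‖ = 1 := u.orthonormal.1 j
    calc ∑ i : Fin k, (inner ℝ (u j) (v i) : ℝ) ^ 2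
        = ∑ i : Fin k, ‖(inner ℝ (v i) (u j) : ℝ)‖ ^ 2 := by
          refine Finset.sum_congr rfl fun i _ => ?_
          rw [real_inner_comm, Real.norm_eq_abs, sq_abs]
      _ ≤ ‖u j‖ ^ 2 := hb
      _ = 1 := by rw [hnorm]; norm_num
  · calc ∑ j, ∑ i : Fin k, (inner ℝ (u j) (v i) : ℝ) ^ 2
        = ∑ i : Fin k, ∑ j, (inner ℝ (u j) (v i) : ℝ) ^ 2 := by rw [Finset.sum_comm]
      _ = ∑ i : Fin k, ∑ y, Ψ y i * Ψ y i := by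
          exact Finset.sum_congr rfl fun i _ => parseval u (v i)
      _ = ∑ i : Fin k, (1:ℝ) := by
          refine Finset.sum_congr rfl fun i _ => ?_
          rw [horth i i]; simp
      _ = (k : ℝ) := by simp

/-- Rayleigh bound for a single unit vector -/
lemma quad_le_top {k₁ k₂ : ℕ} (hk₂ : 0 < k₂) (A : Matrix (Fin k₁) (Fin k₂) ℝ)
    (ψ : Fin k₂ → ℝ) (hψ : ∑ x, ψ x * ψ x = 1) :
    ∑ x, (A.mulVec ψ x) ^ 2
      ≤ ithLargest (Matrix.isHermitian_conjTranspose_mul_self A).eigenvalues 0 := by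
  set hM := Matrix.isHermitian_conjTranspose_mul_self A
  have hMeq : Aᴴ * A = Aᵀ * A := by rw [conjT_eq]
  set u := hM.eigenvectorBasis
  set lam := hM.eigenvalues
  have hexp : ∑ x, (A.mulVec ψ x) ^ 2
      = ∑ j, lam j * (inner ℝ (u j) (WithLp.toLp 2 ψ) : ℝ) ^ 2 := by
    rw [← quadform_eq]
    have : (Aᵀ * A).mulVec ψ = (Aᴴ * A).mulVec ψ := by rw [hMeq]
    rw [this]
    exact quad_eigen hM (WithLp.toLp 2 ψ)
  rw [hexp]
  have h0 : (0:ℕ) < Fintype.card (Fin k₂) := by simpa using hk₂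
  calc ∑ j, lam j * (inner ℝ (u j) (WithLp.toLp 2 ψ) : ℝ) ^ 2
      ≤ ∑ j, ithLargest lam 0 * (inner ℝ (u j) (WithLp.toLp 2 ψ) : ℝ) ^ 2 := by
        refine Finset.sum_le_sum fun j _ => ?_
        exact mul_le_mul_of_nonneg_right (le_ithLargest_zero lam j h0) (sq_nonneg _)
    _ = ithLargest lam 0 * ∑ j, (inner ℝ (u j) (WithLp.toLp 2 ψ) : ℝ) ^ 2 := by
        rw [Finset.mul_sum]
    _ = ithLargest lam 0 := by rw [parseval u (WithLp.toLp 2 ψ), WithLp.ofLp_toLp, hψ, mul_one]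



lemma frobSq_nonneg {m n : Type*} [Fintype m] [Fintype n] (A : Matrix m n ℝ) :
    0 ≤ frobSq A :=
  Finset.sum_nonneg fun _ _ => Finset.sum_nonneg fun _ _ => sq_nonneg _

lemma frobNorm_nonneg {m n : Type*} [Fintype m] [Fintype n] (A : Matrix m n ℝ) :
    0 ≤ frobNorm A := Real.sqrt_nonneg _

lemma frobSq_eq_sq {m n : Type*} [Fintype m] [Fintype n] (A : Matrix m n ℝ) :
    frobSq A = frobNorm A ^ 2 := (Real.sq_sqrt (frobSq_nonneg A)).symm

lemma frobNorm_eq {m n : Type*} [Fintype m] [Fintype n] (A : Matrix m n ℝ)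
    (w : EuclideanSpace ℝ (m × n)) (hw : ∀ p, w p = A p.1 p.2) :
    frobNorm A = ‖w‖ := by
  rw [frobNorm, EuclideanSpace.norm_eq]
  congr 1
  rw [Fintype.sum_prod_type]
  exact Finset.sum_congr rfl fun i _ => Finset.sum_congr rfl fun j _ => by
    rw [hw (i, j), Real.norm_eq_abs, sq_abs]

lemma frobNorm_triangle {m n : Type*} [Fintype m] [Fintype n] (A B : Matrix m n ℝ) :
    frobNorm (A + B) ≤ frobNorm A + frobNorm B := by
  let wA : EuclideanSpace ℝ (m × n) := WithLp.toLp 2 (fun p => A p.1 p.2)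
  let wB : EuclideanSpace ℝ (m × n) := WithLp.toLp 2 (fun p => B p.1 p.2)
  rw [frobNorm_eq A wA (fun p => rfl), frobNorm_eq B wB (fun p => rfl),
    frobNorm_eq (A + B) (wA + wB) (fun p => rfl)]
  exact norm_add_le _ _

lemma frobNorm_sub_le {m n : Type*} [Fintype m] [Fintype n] (A B : Matrix m n ℝ) :
    frobNorm A ≤ frobNorm B + frobNorm (A - B) := by
  have := frobNorm_triangle B (A - B)
  rwa [add_sub_cancel] at this

lemma frobNorm_neg {m n : Type*} [Fintype m] [Fintype n] (A : Matrix m n ℝ) :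
    frobNorm (-A) = frobNorm A := by
  rw [frobNorm, frobNorm]
  congr 1
  exact Finset.sum_congr rfl fun i _ => Finset.sum_congr rfl fun j _ => by
    rw [Matrix.neg_apply, neg_sq]

lemma frobSq_mul {k₁ k₂ k : ℕ} (A : Matrix (Fin k₁) (Fin k₂) ℝ)
    (Ψ : Matrix (Fin k₂) (Fin k) ℝ) :
    frobSq (A * Ψ) = ∑ i : Fin k, ∑ x, (A.mulVec (fun y => Ψ y i) x) ^ 2 := by
  rw [frobSq, Finset.sum_comm]
  refine Finset.sum_congr rfl fun i _ => Finset.sum_congr rfl fun x _ => ?_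
  rw [Matrix.mul_apply]
  rfl

lemma bessel_rows {k₁ k₂ k : ℕ} (Δ : Matrix (Fin k₁) (Fin k₂) ℝ)
    (Ψ : Matrix (Fin k₂) (Fin k) ℝ)
    (horth : ∀ i j, ∑ x, Ψ x i * Ψ x j = if i = j then (1:ℝ) else 0) :
    frobSq (Δ * Ψ) ≤ frobSq Δ := by
  set v : Fin k → EuclideanSpace ℝ (Fin k₂) := fun i => WithLp.toLp 2 (fun x => Ψ x i)
  have hv := orth_family Ψ horth v (fun i x => rfl)
  rw [frobSq, frobSq]
  refine Finset.sum_le_sum fun r _ => ?_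
  set w : EuclideanSpace ℝ (Fin k₂) := WithLp.toLp 2 (fun y => Δ r y) with hwdef
  have hb := hv.sum_inner_products_le (s := Finset.univ) w
  have h1 : ∀ i, (Δ * Ψ) r i = (inner ℝ (v i) w : ℝ) := by
    intro i
    rw [hinner, Matrix.mul_apply]
    exact Finset.sum_congr rfl fun y _ => by show Δ r y * Ψ y i = Ψ y i * Δ r y; ring
  have h2 : ‖w‖ ^ 2 = ∑ y, Δ r y ^ 2 := by
    rw [← real_inner_self_eq_norm_sq, hinner]
    exact Finset.sum_congr rfl fun y _ => (pow_two _).symm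
  calc ∑ i, (Δ * Ψ) r i ^ 2 = ∑ i, ‖(inner ℝ (v i) w : ℝ)‖ ^ 2 := by
        refine Finset.sum_congr rfl fun i _ => ?_
        rw [h1, Real.norm_eq_abs, sq_abs]
    _ ≤ ‖w‖ ^ 2 := hb
    _ = ∑ y, Δ r y ^ 2 := h2

lemma le_of_sq_le_sq {a b : ℝ} (ha : 0 ≤ a) (hb : 0 ≤ b) (h : a ^ 2 ≤ b ^ 2) : a ≤ b := by
  nlinarith


end Aux
theorem stmt_17 {k₁ k₂ : ℕ} (A₁ A₂ : Matrix (Fin k₁) (Fin k₂) ℝ)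
    (k : ℕ) (hk1 : 1 ≤ k) (hk : k ≤ min k₁ k₂)
    (Ψ₁ Ψ₂ : Matrix (Fin k₂) (Fin k) ℝ)
    (hΨ₁orth : ∀ i j, ∑ x, Ψ₁ x i * Ψ₁ x j = if i = j then (1 : ℝ) else 0)
    (hΨ₂orth : ∀ i j, ∑ x, Ψ₂ x i * Ψ₂ x j = if i = j then (1 : ℝ) else 0)
    (hΨ₁eig : ∀ i : Fin k,
        (A₁ᵀ * A₁).mulVec (fun x => Ψ₁ x i) = fun x => singularValue A₁ (i : ℕ) ^ 2 * Ψ₁ x i)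
    (hΨ₂eig : ∀ i : Fin k,
        (A₂ᵀ * A₂).mulVec (fun x => Ψ₂ x i) = fun x => singularValue A₂ (i : ℕ) ^ 2 * Ψ₂ x i) :
    (0 ≤ frobSq (A₁ * Ψ₁) - frobSq (A₁ * Ψ₂)) ∧
    (frobSq (A₁ * Ψ₁) - frobSq (A₁ * Ψ₂)
        ≤ 4 * (k : ℝ) * singularValue A₁ 0 * singularValue (A₁ - A₂) 0) ∧
    (frobSq (A₁ * Ψ₁) - frobSq (A₁ * Ψ₂)
        ≤ 4 * Real.sqrt (k : ℝ) * singularValue A₁ 0 * frobNorm (A₁ - A₂)) := by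
  have hkk₂ : k ≤ k₂ := le_trans hk (min_le_right _ _)
  have hk₂pos : 0 < k₂ := lt_of_lt_of_le hk1 hkk₂
  set Δ := A₁ - A₂ with hΔdef
  have hsv_sq : ∀ (A : Matrix (Fin k₁) (Fin k₂) ℝ) (i : ℕ), i < k₂ →
      singularValue A i ^ 2
        = ithLargest (Matrix.isHermitian_conjTranspose_mul_self A).eigenvalues i := by
    intro A i hi
    rw [singularValue, Real.sq_sqrt]
    obtain ⟨j, hj⟩ := Aux.ithLargest_mem
      (Matrix.isHermitian_conjTranspose_mul_self A).eigenvalues (by simpa using hi)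
    rw [← hj]
    exact Matrix.eigenvalues_conjTranspose_mul_self_nonneg A j
  have hsv_nonneg : ∀ (A : Matrix (Fin k₁) (Fin k₂) ℝ) (i : ℕ), 0 ≤ singularValue A i :=
    fun A i => Real.sqrt_nonneg _
  have hsv_le : ∀ (A : Matrix (Fin k₁) (Fin k₂) ℝ) (i : Fin k),
      singularValue A (i : ℕ) ≤ singularValue A 0 := by
    intro A i
    exact Real.sqrt_le_sqrt (Aux.ithLargest_anti _ (Nat.zero_le _)
      (by simpa using lt_of_lt_of_le i.2 hkk₂))
  have hdiag : ∀ (A : Matrix (Fin k₁) (Fin k₂) ℝ) (Ψ : Matrix (Fin k₂) (Fin k) ℝ),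
      (∀ i j, ∑ x, Ψ x i * Ψ x j = if i = j then (1:ℝ) else 0) →
      (∀ i : Fin k, (Aᵀ * A).mulVec (fun x => Ψ x i)
          = fun x => singularValue A (i : ℕ) ^ 2 * Ψ x i) →
      frobSq (A * Ψ) = ∑ i : Fin k, singularValue A (i : ℕ) ^ 2 := by
    intro A Ψ horth heig
    rw [Aux.frobSq_mul]
    refine Finset.sum_congr rfl fun i _ => ?_
    rw [← Aux.quadform_eq, heig i]
    calc ∑ y, Ψ y i * (singularValue A (i:ℕ) ^ 2 * Ψ y i)
        = singularValue A (i:ℕ) ^ 2 * ∑ y, Ψ y i * Ψ y i := by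
          rw [Finset.mul_sum]
          exact Finset.sum_congr rfl fun y _ => by ring
      _ = singularValue A (i:ℕ) ^ 2 := by rw [horth i i]; simp
  have hKF : ∀ (A : Matrix (Fin k₁) (Fin k₂) ℝ) (Ψ : Matrix (Fin k₂) (Fin k) ℝ),
      (∀ i j, ∑ x, Ψ x i * Ψ x j = if i = j then (1:ℝ) else 0) →
      frobSq (A * Ψ) ≤ ∑ i : Fin k, singularValue A (i : ℕ) ^ 2 := by
    intro A Ψ horth
    rw [Aux.frobSq_mul]
    refine le_trans (Aux.kyfan hk1 hkk₂ A Ψ horth) (le_of_eq ?_)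
    rw [← Fin.sum_univ_eq_sum_range]
    exact Finset.sum_congr rfl fun i _ => (hsv_sq A i (lt_of_lt_of_le i.2 hkk₂)).symm
  have hconst : ∀ c : ℝ, ∑ _i : Fin k, c = (k:ℝ) * c := by
    intro c
    rw [Finset.sum_const, Finset.card_univ, Fintype.card_fin, nsmul_eq_mul]
  have hcsb : ∀ (Ψ : Matrix (Fin k₂) (Fin k) ℝ),
      (∀ i j, ∑ x, Ψ x i * Ψ x j = if i = j then (1:ℝ) else 0) →
      frobNorm (Δ * Ψ) ≤ Real.sqrt k * singularValue Δ 0 := by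
    intro Ψ horth
    apply Aux.le_of_sq_le_sq (Aux.frobNorm_nonneg _)
      (mul_nonneg (Real.sqrt_nonneg _) (hsv_nonneg Δ 0))
    rw [← Aux.frobSq_eq_sq, mul_pow, Real.sq_sqrt (Nat.cast_nonneg k), Aux.frobSq_mul]
    calc ∑ i : Fin k, ∑ x, (Δ.mulVec (fun y => Ψ y i) x) ^ 2
        ≤ ∑ _i : Fin k, singularValue Δ 0 ^ 2 := by
          refine Finset.sum_le_sum fun i _ => ?_
          rw [hsv_sq Δ 0 hk₂pos]
          refine Aux.quad_le_top hk₂pos Δ _ ?_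
          rw [horth i i]
          simp
      _ = (k:ℝ) * singularValue Δ 0 ^ 2 := hconst _
  have hcfb : ∀ (Ψ : Matrix (Fin k₂) (Fin k) ℝ),
      (∀ i j, ∑ x, Ψ x i * Ψ x j = if i = j then (1:ℝ) else 0) →
      frobNorm (Δ * Ψ) ≤ frobNorm Δ := by
    intro Ψ horth
    apply Aux.le_of_sq_le_sq (Aux.frobNorm_nonneg _) (Aux.frobNorm_nonneg _)
    rw [← Aux.frobSq_eq_sq, ← Aux.frobSq_eq_sq]
    exact Aux.bessel_rows Δ Ψ horth
  set s := frobNorm (A₁ * Ψ₁) with hs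
  set x := frobNorm (A₁ * Ψ₂) with hx
  set b := frobNorm (A₂ * Ψ₂) with hb
  set a := frobNorm (A₂ * Ψ₁) with ha
  set c₁ := frobNorm (Δ * Ψ₁) with hc₁
  set c₂ := frobNorm (Δ * Ψ₂) with hc₂
  have hs0 : 0 ≤ s := Aux.frobNorm_nonneg _
  have hx0 : 0 ≤ x := Aux.frobNorm_nonneg _
  have hxs : x ≤ s := by
    apply Aux.le_of_sq_le_sq hx0 hs0
    rw [← Aux.frobSq_eq_sq, ← Aux.frobSq_eq_sq]
    calc frobSq (A₁ * Ψ₂) ≤ ∑ i : Fin k, singularValue A₁ (i:ℕ) ^ 2 := hKF A₁ Ψ₂ hΨ₂orth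
      _ = frobSq (A₁ * Ψ₁) := (hdiag A₁ Ψ₁ hΨ₁orth hΨ₁eig).symm
  have hab : a ≤ b := by
    apply Aux.le_of_sq_le_sq (Aux.frobNorm_nonneg _) (Aux.frobNorm_nonneg _)
    rw [← Aux.frobSq_eq_sq, ← Aux.frobSq_eq_sq]
    calc frobSq (A₂ * Ψ₁) ≤ ∑ i : Fin k, singularValue A₂ (i:ℕ) ^ 2 := hKF A₂ Ψ₁ hΨ₁orth
      _ = frobSq (A₂ * Ψ₂) := (hdiag A₂ Ψ₂ hΨ₂orth hΨ₂eig).symm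
  have htri1 : s ≤ a + c₁ := by
    have h := Aux.frobNorm_sub_le (A₁ * Ψ₁) (A₂ * Ψ₁)
    rwa [show A₁ * Ψ₁ - A₂ * Ψ₁ = Δ * Ψ₁ from (Matrix.sub_mul A₁ A₂ Ψ₁).symm] at h
  have htri2 : b ≤ x + c₂ := by
    have h := Aux.frobNorm_sub_le (A₂ * Ψ₂) (A₁ * Ψ₂)
    have he : A₂ * Ψ₂ - A₁ * Ψ₂ = -(Δ * Ψ₂) := by
      rw [hΔdef, ← Matrix.sub_mul, ← Matrix.neg_mul, neg_sub]
    rwa [he, Aux.frobNorm_neg] at h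
  have hsx : s - x ≤ c₁ + c₂ := by linarith
  have hsb : s ≤ Real.sqrt k * singularValue A₁ 0 := by
    apply Aux.le_of_sq_le_sq hs0 (mul_nonneg (Real.sqrt_nonneg _) (hsv_nonneg A₁ 0))
    rw [← Aux.frobSq_eq_sq, mul_pow, Real.sq_sqrt (Nat.cast_nonneg k),
      hdiag A₁ Ψ₁ hΨ₁orth hΨ₁eig]
    calc ∑ i : Fin k, singularValue A₁ (i:ℕ) ^ 2
        ≤ ∑ _i : Fin k, singularValue A₁ 0 ^ 2 :=
          Finset.sum_le_sum fun i _ =>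
            pow_le_pow_left₀ (hsv_nonneg A₁ _) (hsv_le A₁ i) 2
      _ = (k:ℝ) * singularValue A₁ 0 ^ 2 := hconst _
  have hc₁s := hcsb Ψ₁ hΨ₁orth
  have hc₂s := hcsb Ψ₂ hΨ₂orth
  have hc₁f := hcfb Ψ₁ hΨ₁orth
  have hc₂f := hcfb Ψ₂ hΨ₂orth
  have hc₁0 : 0 ≤ c₁ := Aux.frobNorm_nonneg _
  have hc₂0 : 0 ≤ c₂ := Aux.frobNorm_nonneg _
  have hDform : frobSq (A₁ * Ψ₁) - frobSq (A₁ * Ψ₂) = (s - x) * (s + x) := by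
    rw [Aux.frobSq_eq_sq (A₁ * Ψ₁), Aux.frobSq_eq_sq (A₁ * Ψ₂)]
    ring
  have hD2 : (s - x) * (s + x) ≤ (c₁ + c₂) * (2 * s) :=
    mul_le_mul hsx (by linarith) (by linarith) (by linarith)
  have hsq : Real.sqrt k * Real.sqrt k = (k:ℝ) := Real.mul_self_sqrt (Nat.cast_nonneg k)
  have hσ0 : 0 ≤ singularValue A₁ 0 := hsv_nonneg A₁ 0
  have hδ0 : 0 ≤ singularValue Δ 0 := hsv_nonneg Δ 0
  have hf0 : 0 ≤ frobNorm Δ := Aux.frobNorm_nonneg Δ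
  have hrk0 : 0 ≤ Real.sqrt k := Real.sqrt_nonneg _
  refine ⟨?_, ?_, ?_⟩
  · rw [hDform]
    exact mul_nonneg (by linarith) (by linarith)
  · rw [hDform]
    calc (s - x) * (s + x) ≤ (c₁ + c₂) * (2 * s) := hD2
      _ ≤ (Real.sqrt k * singularValue Δ 0 + Real.sqrt k * singularValue Δ 0)
            * (2 * (Real.sqrt k * singularValue A₁ 0)) := by
          apply mul_le_mul (by linarith) (by linarith) (by linarith) (by positivity)
      _ = 4 * (Real.sqrt k * Real.sqrt k) * singularValue A₁ 0 * singularValue Δ 0 := by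
          ring
      _ = 4 * (k:ℝ) * singularValue A₁ 0 * singularValue Δ 0 := by rw [hsq]
  · rw [hDform]
    calc (s - x) * (s + x) ≤ (c₁ + c₂) * (2 * s) := hD2
      _ ≤ (frobNorm Δ + frobNorm Δ) * (2 * (Real.sqrt k * singularValue A₁ 0)) := by
          apply mul_le_mul (by linarith) (by linarith) (by linarith) (by positivity)
      _ = 4 * Real.sqrt (k:ℝ) * singularValue A₁ 0 * frobNorm Δ := by ring
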